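/- For n ≥ 8, let G be the complement of K_{1,n-3} ∪ K_2 (on n vertices). Then the least signless Laplacian eigenvalue of G satisfies q_n(G) ≥ 1. -/

import Mathlib

open Matrix SimpleGraph

/-- The signless Laplacian matrix `Q(G) = D(G) + A(G)` of a simple graph, over `ℝ`. -/
def SimpleGraph.signlessLap {V : Type*} [Fintype V] [DecidableEq V] (G : SimpleGraph V)
    [DecidableRel G.Adj] : Matrix V V ℝ :=
  G.degMatrix ℝ + G.adjMatrix ℝ

instance sumDecAdj {α β : Type*} (G : SimpleGraph α) (H : SimpleGraph β)
    [DecidableRel G.Adj] [DecidableRel H.Adj] : DecidableRel (G ⊕g H).Adj := fun u v =>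
  match u, v with
  | Sum.inl a, Sum.inl b => decidable_of_iff (G.Adj a b) (by simp)
  | Sum.inl _, Sum.inr _ => Decidable.isFalse (by simp)
  | Sum.inr _, Sum.inl _ => Decidable.isFalse (by simp)
  | Sum.inr a, Sum.inr b => decidable_of_iff (H.Adj a b) (by simp)

instance cbgDecAdj (α β : Type*) [DecidableEq α] [DecidableEq β] :
    DecidableRel (completeBipartiteGraph α β).Adj := fun _ _ =>
  inferInstanceAs (Decidable (_ ∨ _))

lemma degree_eq_sum' {V : Type*} [Fintype V] [DecidableEq V] (G : SimpleGraph V)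
    [DecidableRel G.Adj] (a : V) :
    G.degree a = ∑ b, if G.Adj a b then 1 else 0 := by
  rw [← SimpleGraph.card_neighborFinset_eq_degree, SimpleGraph.neighborFinset_eq_filter,
    Finset.card_filter]

lemma signlessLap_mulVec' {V : Type*} [Fintype V] [DecidableEq V] (G : SimpleGraph V)
    [DecidableRel G.Adj] (y : V → ℝ) (w : V) :
    (G.signlessLap *ᵥ y) w = ∑ w', if G.Adj w w' then (y w + y w') else 0 := by
  have hdeg : (G.degree w : ℝ) = ∑ w', if G.Adj w w' then (1:ℝ) else 0 := by
    rw [degree_eq_sum']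
    push_cast
    exact Finset.sum_congr rfl (fun b _ => by split <;> simp)
  simp only [SimpleGraph.signlessLap, Matrix.add_mulVec, Pi.add_apply,
    SimpleGraph.degMatrix_mulVec_apply, SimpleGraph.adjMatrix_mulVec_apply, hdeg,
    Finset.sum_mul]
  rw [SimpleGraph.neighborFinset_eq_filter, Finset.sum_filter, ← Finset.sum_add_distrib]
  exact Finset.sum_congr rfl fun b _ => by split <;> simp

lemma key_concrete (m : ℕ) (hm : 5 ≤ m) (μ : ℝ)
    (hμ : μ ∈ spectrum ℝ
      ((completeBipartiteGraph (Fin 1) (Fin m) ⊕g (⊤ : SimpleGraph (Fin 2)))ᶜ).signlessLap) :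
    1 ≤ μ := by
  classical
  set G : SimpleGraph ((Fin 1 ⊕ Fin m) ⊕ Fin 2) :=
    (completeBipartiteGraph (Fin 1) (Fin m) ⊕g (⊤ : SimpleGraph (Fin 2)))ᶜ with hG
  rw [← AlgEquiv.spectrum_eq ((Matrix.toLinAlgEquiv' : Matrix ((Fin 1 ⊕ Fin m) ⊕ Fin 2) ((Fin 1 ⊕ Fin m) ⊕ Fin 2) ℝ ≃ₐ[ℝ] _)),
    ← Module.End.hasEigenvalue_iff_mem_spectrum] at hμ
  obtain ⟨y, hy⟩ := hμ.exists_hasEigenvector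
  have heig : ∀ w, (G.signlessLap *ᵥ y) w = μ * y w := by
    intro w
    have h := hy.apply_eq_smul
    have h2 : Matrix.toLin' G.signlessLap y = μ • y := h
    have := congrFun h2 w
    simpa [Matrix.toLin'_apply] using this
  set c := y (Sum.inl (Sum.inl 0)) with hc
  set u := y (Sum.inr 0) with hu
  set v := y (Sum.inr 1) with hv
  set l : Fin m → ℝ := fun i => y (Sum.inl (Sum.inr i)) with hl
  set S := ∑ i, l i with hS
  set P := ∑ i, l i * l i with hP
  have sumW : ∀ f : ((Fin 1 ⊕ Fin m) ⊕ Fin 2) → ℝ, ∑ w, f w =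
      f (Sum.inl (Sum.inl 0)) + (∑ i, f (Sum.inl (Sum.inr i))) +
        (f (Sum.inr 0) + f (Sum.inr 1)) := by
    intro f
    rw [Fintype.sum_sum_type, Fintype.sum_sum_type]
    simp [Fin.sum_univ_two]
  -- mulVec values
  have hQc : (G.signlessLap *ᵥ y) (Sum.inl (Sum.inl 0)) = (c + u) + (c + v) := by
    rw [signlessLap_mulVec', sumW]
    simp [hG, completeBipartiteGraph]
    rfl
  have hQu : (G.signlessLap *ᵥ y) (Sum.inr 0) = (u + c) + (m * u + S) := by
    rw [signlessLap_mulVec', sumW]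
    simp [hG, completeBipartiteGraph, Finset.sum_add_distrib, hS, mul_comm]
    rfl
  have hQv : (G.signlessLap *ᵥ y) (Sum.inr 1) = (v + c) + (m * v + S) := by
    rw [signlessLap_mulVec', sumW]
    simp [hG, completeBipartiteGraph, Finset.sum_add_distrib, hS, mul_comm]
    rfl
  have hQl : ∀ i, (G.signlessLap *ᵥ y) (Sum.inl (Sum.inr i)) =
      ((m * l i + S) - 2 * l i) + ((l i + u) + (l i + v)) := by
    intro i
    rw [signlessLap_mulVec', sumW]
    have hsplit : (∑ j, if i ≠ j then l i + l j else 0) = (m * l i + S) - 2 * l i := by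
      have : ∀ j, (if i ≠ j then l i + l j else 0)
          = (l i + l j) - (if i = j then l i + l j else 0) := by
        intro j; by_cases h : i = j <;> simp [h]
      rw [Finset.sum_congr rfl fun j _ => this j, Finset.sum_sub_distrib,
        Finset.sum_add_distrib, Finset.sum_ite_eq]
      simp [hS]
      ring
    simp only [hG]
    simp [completeBipartiteGraph]
    rw [← hsplit]
    exact congrArg₂ (· + ·)
      (Finset.sum_congr rfl fun j _ => by by_cases h : i = j <;> simp [h, hl]) rfl
  -- total sums
  have hN : ∑ w, y w * y w = c*c + P + (u*u + v*v) := by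
    rw [sumW (fun w => y w * y w)]
  have hNpos : 0 < c*c + P + (u*u + v*v) := by
    rw [← hN]
    obtain ⟨w, hw⟩ : ∃ w, y w ≠ 0 := Function.ne_iff.mp hy.right
    exact Finset.sum_pos' (fun w _ => mul_self_nonneg (y w))
      ⟨w, Finset.mem_univ w, mul_self_pos.mpr hw⟩
  have hPnn : 0 ≤ P := Finset.sum_nonneg fun i _ => mul_self_nonneg (l i)
  have hleaf : ∑ i, ((((m:ℝ) * l i + S) - 2*l i) + ((l i + u) + (l i + v))) * l i
      = m * P + S*S + (u+v)*S := by
    have h1 : ∀ i : Fin m, ((((m:ℝ) * l i + S) - 2*l i) + ((l i + u) + (l i + v))) * l i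
        = m * (l i * l i) + (S + u + v) * l i := fun i => by ring
    rw [Finset.sum_congr rfl fun i _ => h1 i, Finset.sum_add_distrib, ← Finset.mul_sum,
      ← Finset.mul_sum, ← hP, ← hS]
    ring
  have hTmu : ∑ w, (G.signlessLap *ᵥ y) w * y w = μ * (c*c + P + (u*u + v*v)) := by
    rw [← hN, Finset.mul_sum]
    exact Finset.sum_congr rfl fun w _ => by rw [heig w]; ring
  have hTval : ∑ w, (G.signlessLap *ᵥ y) w * y w
      = ((c + u) + (c + v)) * c + ((m:ℝ) * P + S*S + (u+v)*S)
        + (((u + c) + (m * u + S)) * u + ((v + c) + (m * v + S)) * v) := by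
    rw [sumW (fun w => (G.signlessLap *ᵥ y) w * y w), hQc, hQu, hQv, ← hleaf]
    rw [Finset.sum_congr rfl fun i _ => by rw [hQl i]]
  have heq : μ * (c*c + P + (u*u + v*v))
      = ((c + u) + (c + v)) * c + ((m:ℝ) * P + S*S + (u+v)*S)
        + (((u + c) + (m * u + S)) * u + ((v + c) + (m * v + S)) * v) := by
    rw [← hTmu, hTval]
  have hm' : (5:ℝ) ≤ (m:ℝ) := by exact_mod_cast hm
  nlinarith [heq, hNpos, hPnn, hm', sq_nonneg (c + u + v), sq_nonneg (S + u + v),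
    sq_nonneg (u - v), mul_nonneg (sub_nonneg.mpr hm') hPnn,
    mul_nonneg (sub_nonneg.mpr hm') (mul_self_nonneg u),
    mul_nonneg (sub_nonneg.mpr hm') (mul_self_nonneg v)]

/-- For `n ≥ 8`, if `G` is the complement of `K_{1,n-3} ∪ K₂` on `n` vertices, then
every signless Laplacian eigenvalue of `G` (in particular the least) is at least `1`. -/
theorem signlessLap_least_eigenvalue_compl_star_union_edge
    {V : Type*} [Fintype V] [DecidableEq V] (H : SimpleGraph V) [DecidableRel H.Adj]
    (n : ℕ) (hn : Fintype.card V = n) (h8 : 8 ≤ n)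
    (hH : Nonempty (H ≃g
      completeBipartiteGraph (Fin 1) (Fin (n - 3)) ⊕g (⊤ : SimpleGraph (Fin 2)))) :
    ∀ μ ∈ spectrum ℝ (Hᶜ).signlessLap, 1 ≤ μ := by
  obtain ⟨e⟩ := hH
  intro μ hμ
  refine key_concrete (n - 3) (by omega) μ ?_
  have hAdj : ∀ w w', (Hᶜ).Adj (e.symm w) (e.symm w') ↔
      ((completeBipartiteGraph (Fin 1) (Fin (n - 3)) ⊕g (⊤ : SimpleGraph (Fin 2)))ᶜ).Adj w w' := by
    intro w w'
    rw [SimpleGraph.compl_adj, SimpleGraph.compl_adj, e.symm.map_adj_iff]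
    have : e.symm w = e.symm w' ↔ w = w' := e.toEquiv.symm.injective.eq_iff
    tauto
  have hmat : Matrix.reindexAlgEquiv ℝ ℝ e.toEquiv ((Hᶜ).signlessLap)
      = ((completeBipartiteGraph (Fin 1) (Fin (n - 3)) ⊕g
          (⊤ : SimpleGraph (Fin 2)))ᶜ).signlessLap := by
    ext w w'
    rw [Matrix.reindexAlgEquiv_apply, Matrix.reindex_apply, Matrix.submatrix_apply]
    have hdeg : (Hᶜ).degree (e.symm w) =
        ((completeBipartiteGraph (Fin 1) (Fin (n - 3)) ⊕g
          (⊤ : SimpleGraph (Fin 2)))ᶜ).degree w := by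
      rw [degree_eq_sum', degree_eq_sum',
        ← Equiv.sum_comp e.toEquiv.symm (fun b => if (Hᶜ).Adj (e.symm w) b then 1 else 0)]
      exact Finset.sum_congr rfl fun w' _ => if_congr (hAdj w w') rfl rfl
    show (Hᶜ).signlessLap (e.symm w) (e.symm w') = _
    unfold SimpleGraph.signlessLap
    simp only [Matrix.add_apply, SimpleGraph.degMatrix, Matrix.diagonal_apply,
      SimpleGraph.adjMatrix_apply]
    have hiff : e.symm w = e.symm w' ↔ w = w' := e.toEquiv.symm.injective.eq_iff
    congr 1
    · rw [if_congr hiff rfl rfl, hdeg]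
    · rw [if_congr (hAdj w w') rfl rfl]
  rw [← hmat, AlgEquiv.spectrum_eq]
  exact hμ
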